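/- Let G be a finite simple graph with vertex set V, let k be a positive integer, let T ⊆ V satisfy |Γ_T(Z)| ≥ k − 1 for every Steiner T-cut Z, and fix r ∈ T. Let D be the family of demand cuts, i.e., Steiner (T,r)-cuts X with |Γ_T(X)| = k − 1. If Z and W are distinct min-cores, X ∈ C(Z) and Y ∈ C(W), then X ∩ Y ∩ T = ∅. -/
import Mathlib


/-- `nbr G X` is Γ(X): the set of vertices outside `X` adjacent to a vertex of `X`. -/
def nbr {V : Type*} [Fintype V] [DecidableEq V] (G : SimpleGraph V) [DecidableRel G.Adj]
    (X : Finset V) : Finset V :=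
  Finset.univ.filter (fun v => v ∉ X ∧ ∃ u ∈ X, G.Adj u v)

/-- `cl G X` is X⁺ = X ∪ Γ(X). -/
def cl {V : Type*} [Fintype V] [DecidableEq V] (G : SimpleGraph V) [DecidableRel G.Adj]
    (X : Finset V) : Finset V :=
  X ∪ nbr G X

/-- A demand cut: a Steiner (T,r)-cut X with |Γ_T(X)| = k - 1. -/
def IsDemand {V : Type*} [Fintype V] [DecidableEq V] (G : SimpleGraph V) [DecidableRel G.Adj]
    (T : Finset V) (k : ℕ) (r : V) (X : Finset V) : Prop :=
  (X ∩ T).Nonempty ∧ (T \ cl G X).Nonempty ∧ r ∉ cl G X ∧ (nbr G X ∩ T).card = k - 1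

/-- A min-core: a minimal demand cut. -/
def IsMinCore {V : Type*} [Fintype V] [DecidableEq V] (G : SimpleGraph V) [DecidableRel G.Adj]
    (T : Finset V) (k : ℕ) (r : V) (X : Finset V) : Prop :=
  IsDemand G T k r X ∧ ∀ Y : Finset V, IsDemand G T k r Y → Y ⊆ X → Y = X

/-- A core: a demand cut containing exactly one min-core as a subset. -/
def IsCore {V : Type*} [Fintype V] [DecidableEq V] (G : SimpleGraph V) [DecidableRel G.Adj]
    (T : Finset V) (k : ℕ) (r : V) (X : Finset V) : Prop :=
  IsDemand G T k r X ∧ ∃! Z : Finset V, IsMinCore G T k r Z ∧ Z ⊆ X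

/-- The core family C(Z) of a min-core Z: the cores containing Z. -/
def coreFam {V : Type*} [Fintype V] [DecidableEq V] (G : SimpleGraph V) [DecidableRel G.Adj]
    (T : Finset V) (k : ℕ) (r : V) (Z : Finset V) : Set (Finset V) :=
  {X | IsCore G T k r X ∧ Z ⊆ X}

section Aux
variable {V : Type*} [Fintype V] [DecidableEq V] (G : SimpleGraph V) [DecidableRel G.Adj]

lemma mem_nbr {X : Finset V} {v : V} :
    v ∈ nbr G X ↔ v ∉ X ∧ ∃ u ∈ X, G.Adj u v := by simp [nbr]

lemma mem_cl {X : Finset V} {v : V} :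
    v ∈ cl G X ↔ v ∈ X ∨ (v ∉ X ∧ ∃ u ∈ X, G.Adj u v) := by
  simp [cl, mem_nbr, Finset.mem_union]

lemma nbr_inter_subset (X Y : Finset V) : nbr G (X ∩ Y) ⊆ nbr G X ∪ nbr G Y := by
  intro v hv
  rw [mem_nbr] at hv
  obtain ⟨hvn, u, hu, hadj⟩ := hv
  rw [Finset.mem_inter] at hu
  rw [Finset.mem_inter, not_and_or] at hvn
  rcases hvn with h | h
  · exact Finset.mem_union_left _ ((mem_nbr G).2 ⟨h, u, hu.1, hadj⟩)
  · exact Finset.mem_union_right _ ((mem_nbr G).2 ⟨h, u, hu.2, hadj⟩)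

lemma nbr_union_subset (X Y : Finset V) : nbr G (X ∪ Y) ⊆ nbr G X ∪ nbr G Y := by
  intro v hv
  rw [mem_nbr] at hv
  obtain ⟨hvn, u, hu, hadj⟩ := hv
  rw [Finset.mem_union, not_or] at hvn
  rcases Finset.mem_union.1 hu with h | h
  · exact Finset.mem_union_left _ ((mem_nbr G).2 ⟨hvn.1, u, h, hadj⟩)
  · exact Finset.mem_union_right _ ((mem_nbr G).2 ⟨hvn.2, u, h, hadj⟩)

lemma nbr_inter_union_subset (X Y : Finset V) :
    nbr G (X ∩ Y) ∩ nbr G (X ∪ Y) ⊆ nbr G X ∩ nbr G Y := by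
  intro v hv
  rw [Finset.mem_inter, mem_nbr, mem_nbr] at hv
  obtain ⟨⟨_, u, hu, hadj⟩, hvn, _⟩ := hv
  rw [Finset.mem_union, not_or] at hvn
  rw [Finset.mem_inter] at hu
  exact Finset.mem_inter.2 ⟨(mem_nbr G).2 ⟨hvn.1, u, hu.1, hadj⟩,
    (mem_nbr G).2 ⟨hvn.2, u, hu.2, hadj⟩⟩

lemma cl_inter_subset (X Y : Finset V) : cl G (X ∩ Y) ⊆ cl G X := by
  intro v hv
  rcases Finset.mem_union.1 hv with h | h
  · exact Finset.mem_union_left _ (Finset.inter_subset_left h)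
  · rw [mem_nbr] at h
    obtain ⟨hvn, u, hu, hadj⟩ := h
    by_cases hvX : v ∈ X
    · exact Finset.mem_union_left _ hvX
    · exact Finset.mem_union_right _ ((mem_nbr G).2
        ⟨hvX, u, Finset.inter_subset_left hu, hadj⟩)

lemma cl_union_subset (X Y : Finset V) : cl G (X ∪ Y) ⊆ cl G X ∪ cl G Y := by
  intro v hv
  rcases Finset.mem_union.1 hv with h | h
  · rcases Finset.mem_union.1 h with h | h
    · exact Finset.mem_union_left _ (Finset.mem_union_left _ h)
    · exact Finset.mem_union_right _ (Finset.mem_union_left _ h)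
  · rcases Finset.mem_union.1 (nbr_union_subset G X Y h) with h | h
    · exact Finset.mem_union_left _ (Finset.mem_union_right _ h)
    · exact Finset.mem_union_right _ (Finset.mem_union_right _ h)

variable {G} in
lemma exists_minCore (T : Finset V) (k : ℕ) (r : V) (X : Finset V) :
    IsDemand G T k r X → ∃ M, IsMinCore G T k r M ∧ M ⊆ X := by
  induction X using Finset.strongInduction with
  | _ X ih =>
    intro hX
    by_cases h : ∀ Y, IsDemand G T k r Y → Y ⊆ X → Y = X
    · exact ⟨X, ⟨hX, h⟩, subset_rfl⟩
    · push_neg at h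
      obtain ⟨Y, hYd, hYs, hYne⟩ := h
      obtain ⟨M, hM, hMs⟩ := ih Y (Finset.ssubset_iff_subset_ne.2 ⟨hYs, hYne⟩) hYd
      exact ⟨M, hM, hMs.trans hYs⟩

end Aux

theorem stmt_9 {V : Type*} [Fintype V] [DecidableEq V]
    (G : SimpleGraph V) [DecidableRel G.Adj] (k : ℕ) (hk : 1 ≤ k)
    (T : Finset V)
    -- |Γ_T(Z)| ≥ k-1 for every Steiner T-cut Z
    (hTconn : ∀ Z : Finset V, (Z ∩ T).Nonempty → (T \ cl G Z).Nonempty →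
      k - 1 ≤ (nbr G Z ∩ T).card)
    (r : V) (hr : r ∈ T)
    (Z W : Finset V) (hZ : IsMinCore G T k r Z) (hW : IsMinCore G T k r W) (hZW : Z ≠ W)
    (X Y : Finset V) (hX : X ∈ coreFam G T k r Z) (hY : Y ∈ coreFam G T k r W) :
    X ∩ Y ∩ T = ∅ := by
  by_contra hne
  rw [← Ne, ← Finset.nonempty_iff_ne_empty] at hne
  obtain ⟨hXc, hZX⟩ := hX
  obtain ⟨hYc, hWY⟩ := hY
  obtain ⟨hXd, hXu⟩ := hXc
  obtain ⟨hYd, hYu⟩ := hYc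
  -- X ∩ Y is a Steiner (T,r)-cut
  have hIT : ((X ∩ Y) ∩ T).Nonempty := hne
  have hclI : cl G (X ∩ Y) ⊆ cl G X := cl_inter_subset G X Y
  have hITc : (T \ cl G (X ∩ Y)).Nonempty := by
    obtain ⟨t, ht⟩ := hXd.2.1
    rw [Finset.mem_sdiff] at ht
    exact ⟨t, Finset.mem_sdiff.2 ⟨ht.1, fun h => ht.2 (hclI h)⟩⟩
  have hrI : r ∉ cl G (X ∩ Y) := fun h => hXd.2.2.1 (hclI h)
  -- X ∪ Y is a Steiner (T,r)-cut
  have hrU : r ∉ cl G (X ∪ Y) := by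
    intro h
    rcases Finset.mem_union.1 (cl_union_subset G X Y h) with h | h
    · exact hXd.2.2.1 h
    · exact hYd.2.2.1 h
  have hUT : ((X ∪ Y) ∩ T).Nonempty := by
    obtain ⟨t, ht⟩ := hXd.1
    rw [Finset.mem_inter] at ht
    exact ⟨t, Finset.mem_inter.2 ⟨Finset.mem_union_left _ ht.1, ht.2⟩⟩
  have hUTc : (T \ cl G (X ∪ Y)).Nonempty := ⟨r, Finset.mem_sdiff.2 ⟨hr, hrU⟩⟩
  have h1 : k - 1 ≤ (nbr G (X ∩ Y) ∩ T).card := hTconn _ hIT hITc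
  have h2 : k - 1 ≤ (nbr G (X ∪ Y) ∩ T).card := hTconn _ hUT hUTc
  -- submodularity
  set S1 := nbr G (X ∩ Y) ∩ T
  set S2 := nbr G (X ∪ Y) ∩ T
  set A := nbr G X ∩ T
  set B := nbr G Y ∩ T
  have hsub1 : S1 ∪ S2 ⊆ A ∪ B := by
    intro v hv
    have hvT : v ∈ T := by
      rcases Finset.mem_union.1 hv with h | h
      · exact (Finset.mem_inter.1 h).2
      · exact (Finset.mem_inter.1 h).2
    have : v ∈ nbr G X ∪ nbr G Y := by
      rcases Finset.mem_union.1 hv with h | h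
      · exact nbr_inter_subset G X Y (Finset.mem_inter.1 h).1
      · exact nbr_union_subset G X Y (Finset.mem_inter.1 h).1
    rcases Finset.mem_union.1 this with h | h
    · exact Finset.mem_union_left _ (Finset.mem_inter.2 ⟨h, hvT⟩)
    · exact Finset.mem_union_right _ (Finset.mem_inter.2 ⟨h, hvT⟩)
  have hsub2 : S1 ∩ S2 ⊆ A ∩ B := by
    intro v hv
    rw [Finset.mem_inter, Finset.mem_inter, Finset.mem_inter] at hv
    obtain ⟨⟨hv1, hvT⟩, hv2, _⟩ := hv
    have := nbr_inter_union_subset G X Y (Finset.mem_inter.2 ⟨hv1, hv2⟩)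
    rw [Finset.mem_inter] at this
    exact Finset.mem_inter.2 ⟨Finset.mem_inter.2 ⟨this.1, hvT⟩,
      Finset.mem_inter.2 ⟨this.2, hvT⟩⟩
  have key : S1.card + S2.card ≤ A.card + B.card := by
    calc S1.card + S2.card = (S1 ∪ S2).card + (S1 ∩ S2).card :=
          (Finset.card_union_add_card_inter S1 S2).symm
      _ ≤ (A ∪ B).card + (A ∩ B).card :=
          Nat.add_le_add (Finset.card_le_card hsub1) (Finset.card_le_card hsub2)
      _ = A.card + B.card := Finset.card_union_add_card_inter A B
  have hA : A.card = k - 1 := hXd.2.2.2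
  have hB : B.card = k - 1 := hYd.2.2.2
  have hS1 : S1.card = k - 1 := by omega
  -- X ∩ Y is a demand cut, so it contains a min-core M
  have hId : IsDemand G T k r (X ∩ Y) := ⟨hIT, hITc, hrI, hS1⟩
  obtain ⟨M, hM, hMs⟩ := exists_minCore T k r (X ∩ Y) hId
  have hMZ : M = Z := by
    have h1 := hXu.unique ⟨hM, hMs.trans (Finset.inter_subset_left)⟩ ⟨hZ, hZX⟩
    exact h1
  have hMW : M = W := by
    exact hYu.unique ⟨hM, hMs.trans (Finset.inter_subset_right)⟩ ⟨hW, hWY⟩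
  exact hZW (hMZ ▸ hMW)
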